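/- (Comparison argument, scattering case) Let μ > 0, β > 1, m(t) := exp(μ (1+t)^{1−β}/(1−β)), and let A ≥ 0. Suppose F : [0,∞) → ℝ is continuous, F(0) ≥ A, and for all t ≥ 0, e^{2t} F(t) ≥ F(0) + A ∫₀ᵗ e^{2s} ds + ∫₀ᵗ (e^{2s}/m(s)) ( ∫₀ˢ m(r) μ (1+r)^{−β} F(r) dr ) ds. Then F(t) ≥ A/2 for all t ≥ 0. -/

import Mathlib

open Real Set MeasureTheory intervalIntegral

noncomputable section

/-- The Lai–Takamura multiplier `m(t) = exp(μ (1+t)^{1-β}/(1-β))`. -/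
def mlt (μ β t : ℝ) : ℝ :=
  Real.exp (μ * (1 + t) ^ (1 - β) / (1 - β))

lemma mlt_pos (μ β t : ℝ) : 0 < mlt μ β t := Real.exp_pos _

lemma hasDerivAt_mlt {μ β : ℝ} (hβ : 1 < β) {t : ℝ} (ht : -1 < t) :
    HasDerivAt (mlt μ β) (mlt μ β t * (μ / (1 + t) ^ β)) t := by
  have h1 : (0:ℝ) < 1 + t := by linarith
  have hadd : HasDerivAt (fun x : ℝ => 1 + x) 1 t := (hasDerivAt_id t).const_add 1
  have hrpow : HasDerivAt (fun x : ℝ => (1 + x) ^ (1 - β))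
      ((1 - β) * (1 + t) ^ (1 - β - 1) * 1) t :=
    (Real.hasDerivAt_rpow_const (x := 1 + t) (p := 1 - β) (Or.inl h1.ne')).comp t hadd
  have hf : HasDerivAt (fun x : ℝ => μ * (1 + x) ^ (1 - β) / (1 - β))
      (μ * ((1 - β) * (1 + t) ^ (1 - β - 1) * 1) / (1 - β)) t :=
    (hrpow.const_mul μ).div_const (1 - β)
  have hexp := hf.exp
  have hβ' : (1:ℝ) - β ≠ 0 := by linarith
  convert hexp using 1
  · rfl
  have h2 : (1:ℝ) - β - 1 = -β := by ring
  rw [h2, Real.rpow_neg h1.le]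
  unfold mlt
  field_simp

lemma continuousAt_mlt {μ β t : ℝ} (hβ : 1 < β) (ht : -1 < t) :
    ContinuousAt (mlt μ β) t := (hasDerivAt_mlt hβ ht).continuousAt

lemma continuousAt_kernel {μ β t : ℝ} (hβ : 1 < β) (ht : -1 < t) :
    ContinuousAt (fun r : ℝ => mlt μ β r * (μ / (1 + r) ^ β)) t := by
  have h1 : (0:ℝ) < 1 + t := by linarith
  have hbase : ContinuousAt (fun x : ℝ => 1 + x) t :=
    (continuous_const.add continuous_id).continuousAt
  have hpow : ContinuousAt (fun x : ℝ => (1 + x) ^ β) t :=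
    (Real.continuousAt_rpow_const _ _ (Or.inl h1.ne')).comp hbase
  exact (continuousAt_mlt hβ ht).mul
    (continuousAt_const.div hpow (ne_of_gt (Real.rpow_pos_of_pos h1 β)))

lemma mlt_mono {μ β : ℝ} (hμ : 0 < μ) (hβ : 1 < β) {s : ℝ} (hs : 0 ≤ s) :
    mlt μ β 0 ≤ mlt μ β s := by
  unfold mlt
  apply Real.exp_le_exp.mpr
  have h1 : (1 + s) ^ (1 - β) ≤ 1 := by
    apply Real.rpow_le_one_of_one_le_of_nonpos (by linarith) (by linarith)
  have h0 : (0:ℝ) < (1 + (0:ℝ)) ^ (1 - β) := Real.rpow_pos_of_pos (by norm_num) _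
  have h00 : (1 + (0:ℝ)) ^ (1 - β) = 1 := by norm_num
  rw [h00]
  have hneg : (1:ℝ) - β < 0 := by linarith
  rw [div_le_div_right_of_neg hneg]
  have hpos : (0:ℝ) < (1 + s) ^ (1 - β) := Real.rpow_pos_of_pos (by linarith) _
  nlinarith

theorem comparison_scattering {μ β A : ℝ} (hμ : 0 < μ) (hβ : 1 < β) (hA : 0 ≤ A)
    (F : ℝ → ℝ) (hF : ContinuousOn F (Set.Ici 0)) (hF0 : A ≤ F 0)
    (hineq : ∀ t : ℝ, 0 ≤ t →
      F 0 + A * (∫ s in (0 : ℝ)..t, Real.exp (2 * s))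
          + ∫ s in (0 : ℝ)..t,
              (Real.exp (2 * s) / mlt μ β s) *
                ∫ r in (0 : ℝ)..s, mlt μ β r * (μ / (1 + r) ^ β) * F r
        ≤ Real.exp (2 * t) * F t) :
    ∀ t : ℝ, 0 ≤ t → A / 2 ≤ F t := by
  intro t₀ ht₀
  by_contra hcon
  push_neg at hcon
  obtain ⟨T, hTmem, hmin⟩ := isCompact_Icc.exists_isMinOn ⟨0, left_mem_Icc.mpr ht₀⟩
    (hF.mono (Icc_subset_Ici_self))
  have hT0 : 0 ≤ T := hTmem.1
  set c := F T with hc_def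
  have hc : c < A / 2 := lt_of_le_of_lt (hmin (right_mem_Icc.mpr ht₀)) hcon
  have hE1 : (1:ℝ) ≤ Real.exp (2 * T) := by
    rw [show (1:ℝ) = Real.exp 0 by simp]
    exact Real.exp_le_exp.mpr (by linarith)
  -- value of ∫₀ᵀ e^{2s} ds
  have hI1 : (∫ s in (0:ℝ)..T, Real.exp (2 * s)) = (Real.exp (2 * T) - 1) / 2 := by
    have hd : ∀ s ∈ uIcc (0:ℝ) T,
        HasDerivAt (fun x => Real.exp (2 * x) / 2) (Real.exp (2 * s)) s := by
      intro s _
      have h := ((Real.hasDerivAt_exp (2 * s)).comp s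
        ((hasDerivAt_id s).const_mul 2)).div_const 2
      convert h using 1
      · rfl
      · rfl
      · rfl
      ring
    rw [integral_eq_sub_of_hasDerivAt hd
      ((Real.continuous_exp.comp (continuous_const.mul continuous_id)).intervalIntegrable 0 T)]
    simp
    ring
  have key := hineq T hT0
  rw [hI1] at key
  by_cases hc0 : 0 ≤ c
  · -- the minimum is nonnegative: the Volterra term is nonnegative
    have hI2 : 0 ≤ ∫ s in (0:ℝ)..T,
        (Real.exp (2 * s) / mlt μ β s) *
          ∫ r in (0:ℝ)..s, mlt μ β r * (μ / (1 + r) ^ β) * F r := by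
      apply intervalIntegral.integral_nonneg hT0
      intro s hs
      apply mul_nonneg (div_nonneg (Real.exp_pos _).le (mlt_pos μ β s).le)
      apply intervalIntegral.integral_nonneg hs.1
      intro r hr
      have hrmem : r ∈ Icc 0 t₀ := ⟨hr.1, le_trans hr.2 (le_trans hs.2 hTmem.2)⟩
      have hFr : (0:ℝ) ≤ F r := le_trans hc0 (hmin hrmem)
      have h1r : (0:ℝ) < 1 + r := by linarith [hr.1]
      have : (0:ℝ) ≤ mlt μ β r * (μ / (1 + r) ^ β) :=
        mul_nonneg (mlt_pos μ β r).le
          (div_nonneg hμ.le (Real.rpow_pos_of_pos h1r β).le)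
      exact mul_nonneg this hFr
    nlinarith [Real.exp_pos (2 * T)]
  · push_neg at hc0
    -- c < 0 : bound the Volterra term from below by c (e^{2T}-1)/2
    have hm0 : (0:ℝ) < mlt μ β 0 := mlt_pos μ β 0
    -- FTC: ∫₀ˢ kernel = mlt s - mlt 0
    have hkcont : ∀ s : ℝ, 0 ≤ s →
        ContinuousOn (fun r : ℝ => mlt μ β r * (μ / (1 + r) ^ β)) (Icc 0 s) := by
      intro s _
      intro r hr
      exact (continuousAt_kernel hβ (by linarith [hr.1])).continuousWithinAt
    have hFTC : ∀ s : ℝ, 0 ≤ s →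
        (∫ r in (0:ℝ)..s, mlt μ β r * (μ / (1 + r) ^ β)) = mlt μ β s - mlt μ β 0 := by
      intro s hs
      apply integral_eq_sub_of_hasDerivAt
      · intro r hr
        rw [uIcc_of_le hs] at hr
        exact hasDerivAt_mlt hβ (by linarith [hr.1])
      · apply ContinuousOn.intervalIntegrable
        rw [uIcc_of_le hs]
        exact hkcont s hs
    -- the inner integral is bounded below by c (mlt s - mlt 0)
    have hJ : ∀ s : ℝ, s ∈ Icc 0 T →
        c * (mlt μ β s - mlt μ β 0) ≤
          ∫ r in (0:ℝ)..s, mlt μ β r * (μ / (1 + r) ^ β) * F r := by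
      intro s hs
      have hs0 := hs.1
      have hFcont : ContinuousOn (fun r => mlt μ β r * (μ / (1 + r) ^ β) * F r) (Icc 0 s) :=
        (hkcont s hs0).mul (hF.mono (Icc_subset_Ici_self))
      have h1 : (∫ r in (0:ℝ)..s, c * (mlt μ β r * (μ / (1 + r) ^ β))) ≤
          ∫ r in (0:ℝ)..s, mlt μ β r * (μ / (1 + r) ^ β) * F r := by
        apply intervalIntegral.integral_mono_on hs0
        · apply ContinuousOn.intervalIntegrable
          rw [uIcc_of_le hs0]
          exact (hkcont s hs0).const_smul c
        · apply ContinuousOn.intervalIntegrable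
          rw [uIcc_of_le hs0]
          exact hFcont
        · intro r hr
          have hrmem : r ∈ Icc 0 t₀ := ⟨hr.1, le_trans hr.2 (le_trans hs.2 hTmem.2)⟩
          have hFr : c ≤ F r := hmin hrmem
          have h1r : (0:ℝ) < 1 + r := by linarith [hr.1]
          have hk : (0:ℝ) ≤ mlt μ β r * (μ / (1 + r) ^ β) :=
            mul_nonneg (mlt_pos μ β r).le
              (div_nonneg hμ.le (Real.rpow_pos_of_pos h1r β).le)
          nlinarith
      calc c * (mlt μ β s - mlt μ β 0)
          = ∫ r in (0:ℝ)..s, c * (mlt μ β r * (μ / (1 + r) ^ β)) := by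
            rw [intervalIntegral.integral_const_mul, hFTC s hs0]
        _ ≤ _ := h1
    -- the outer integrand is bounded below by e^{2s} c
    have hgbound : ∀ s : ℝ, s ∈ Icc 0 T →
        Real.exp (2 * s) * c ≤
          (Real.exp (2 * s) / mlt μ β s) *
            ∫ r in (0:ℝ)..s, mlt μ β r * (μ / (1 + r) ^ β) * F r := by
      intro s hs
      have hms : (0:ℝ) < mlt μ β s := mlt_pos μ β s
      have hm0s : mlt μ β 0 ≤ mlt μ β s := mlt_mono hμ hβ hs.1
      have h2 : Real.exp (2 * s) * c ≤
          (Real.exp (2 * s) / mlt μ β s) * (c * (mlt μ β s - mlt μ β 0)) := by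
        rw [div_mul_eq_mul_div, le_div_iff₀ hms]
        nlinarith [mul_pos (Real.exp_pos (2 * s)) hm0]
      exact le_trans h2 (mul_le_mul_of_nonneg_left (hJ s hs)
        (div_nonneg (Real.exp_pos _).le hms.le))
    -- integrability of the outer integrand
    have hΦcont : ContinuousOn
        (fun s : ℝ => ∫ r in (0:ℝ)..s, mlt μ β r * (μ / (1 + r) ^ β) * F r)
        (Icc 0 T) := by
      have hint : IntegrableOn (fun r => mlt μ β r * (μ / (1 + r) ^ β) * F r)
          (uIcc (0:ℝ) T) := by
        rw [uIcc_of_le hT0]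
        exact (((hkcont T hT0)).mul (hF.mono (Icc_subset_Ici_self))).integrableOn_Icc
      have := intervalIntegral.continuousOn_primitive_interval hint
      rwa [uIcc_of_le hT0] at this
    have hgcont : ContinuousOn
        (fun s : ℝ => (Real.exp (2 * s) / mlt μ β s) *
          ∫ r in (0:ℝ)..s, mlt μ β r * (μ / (1 + r) ^ β) * F r) (Icc 0 T) := by
      apply ContinuousOn.mul _ hΦcont
      apply ContinuousOn.div
      · exact (Real.continuous_exp.comp (continuous_const.mul continuous_id)).continuousOn
      · intro s hs
        exact (continuousAt_mlt hβ (by linarith [hs.1])).continuousWithinAt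
      · intro s _
        exact (mlt_pos μ β s).ne'
    have hI2 : c * ((Real.exp (2 * T) - 1) / 2) ≤
        ∫ s in (0:ℝ)..T, (Real.exp (2 * s) / mlt μ β s) *
          ∫ r in (0:ℝ)..s, mlt μ β r * (μ / (1 + r) ^ β) * F r := by
      have hlow : (∫ s in (0:ℝ)..T, Real.exp (2 * s) * c) ≤
          ∫ s in (0:ℝ)..T, (Real.exp (2 * s) / mlt μ β s) *
            ∫ r in (0:ℝ)..s, mlt μ β r * (μ / (1 + r) ^ β) * F r := by
        apply intervalIntegral.integral_mono_on hT0
        · exact ((Real.continuous_exp.comp (continuous_const.mul continuous_id)).mul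
            continuous_const).intervalIntegrable 0 T
        · apply ContinuousOn.intervalIntegrable
          rw [uIcc_of_le hT0]
          exact hgcont
        · exact hgbound
      calc c * ((Real.exp (2 * T) - 1) / 2)
          = ∫ s in (0:ℝ)..T, Real.exp (2 * s) * c := by
            rw [intervalIntegral.integral_mul_const, hI1]; ring
        _ ≤ _ := hlow
    nlinarith [Real.exp_pos (2 * T)]
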